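/- Let d ≥ 1, T > 0, ρ a finite Borel measure on [0, T], and w : [0, T] → ℝ a bounded measurable function with ∫_{[0,T]} w dρ = 0. Let V', W' : ℝ^d → ℝ^d be measurable with each component of W' Lebesgue-integrable on ℝ^d, and let μ : [0,T] × ℝ^d → [0, ∞) be jointly measurable with ∫_{ℝ^d} μ(t, y) dy = 1 for every t, such that (t, y) ↦ μ(t, y)|w(t)| is ρ ⊗ Lebesgue integrable. Define g(y) = ∫_{[0,T]} μ(t, y) w(t) ρ(dt) (so g ∈ L¹(ℝ^d)), b(t, x) = −V'(x) − ∫_{ℝ^d} W'(x − y) μ(t, y) dy, and Lb(x) = ∫_{[0,T]} b(t, x) w(t) ρ(dt) whenever the integrand is ρ-integrable. Then for Lebesgue-almost every x, Lb(x) is well defined and −Lb agrees almost everywhere with the (componentwise) integrable convolution W' ⋆ g, and consequently, for every ξ ∈ ℝ^d and every component k ∈ {1,…,d}: F(−Lb^k)(ξ) = F(W'^k)(ξ) · F(g)(ξ), where F(f)(ξ) = ∫_{ℝ^d} exp(−2πi ξ·x) f(x) dx denotes the Fourier transform. -/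

import Mathlib

open MeasureTheory
open scoped FourierTransform RealInnerProductSpace Convolution

lemma fourier_conv_aux {d : ℕ} (f h : EuclideanSpace ℝ (Fin d) → ℂ)
    (hf : Integrable f volume) (hh : Integrable h volume) (ξ : EuclideanSpace ℝ (Fin d)) :
    FourierTransform.fourier (fun x => ∫ y, f y * h (x - y)) ξ =
      FourierTransform.fourier f ξ * FourierTransform.fourier h ξ := by
  set L : ℂ →L[ℝ] ℂ →L[ℝ] ℂ := ContinuousLinearMap.mul ℝ ℂ with hL
  set F : EuclideanSpace ℝ (Fin d) → ℂ := fun y => 𝐞 (-⟪y, ξ⟫) • f y with hF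
  set H : EuclideanSpace ℝ (Fin d) → ℂ := fun y => 𝐞 (-⟪y, ξ⟫) • h y with hH
  have hFi : Integrable F volume := (Real.fourierIntegral_convergent_iff ξ).2 hf
  have hHi : Integrable H volume := (Real.fourierIntegral_convergent_iff ξ).2 hh
  have key : ∀ x, (𝐞 (-⟪x, ξ⟫) : Circle) • (∫ y, f y * h (x - y)) = (F ⋆[L, volume] H) x := by
    intro x
    have hpt : ∀ y, F y * H (x - y) = (𝐞 (-⟪x, ξ⟫) : ℂ) * (f y * h (x - y)) := by
      intro y
      have hc : (𝐞 (-⟪y, ξ⟫) : ℂ) * (𝐞 (-⟪x - y, ξ⟫) : ℂ) = (𝐞 (-⟪x, ξ⟫) : ℂ) := by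
        rw [← Circle.coe_mul, ← AddChar.map_add_eq_mul]
        congr 2
        rw [inner_sub_left]; ring
      simp only [hF, hH, Circle.smul_def, smul_eq_mul]
      rw [mul_mul_mul_comm, hc]
    rw [Circle.smul_def, smul_eq_mul, ← integral_const_mul, convolution_def]
    refine integral_congr_ae (Filter.Eventually.of_forall fun y => ?_)
    rw [hL]
    simp only [ContinuousLinearMap.mul_apply']
    exact (hpt y).symm
  calc FourierTransform.fourier (fun x => ∫ y, f y * h (x - y)) ξ
      = ∫ x, 𝐞 (-⟪x, ξ⟫) • (∫ y, f y * h (x - y)) := Real.fourier_eq _ _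
    _ = ∫ x, (F ⋆[L, volume] H) x := integral_congr_ae (Filter.Eventually.of_forall key)
    _ = L (∫ x, F x) (∫ x, H x) := integral_convolution L hFi hHi
    _ = FourierTransform.fourier f ξ * FourierTransform.fourier h ξ := rfl

/-- Identification of the interaction kernel in the Vlasov model via the Fourier
transform: with the time-averaged drift `Lb(x) = ∫ b(t,x) w(t) ρ(dt)`, one has, for
Lebesgue-almost every `x`, that `Lb(x)` is well defined and `-Lb` agrees almost
everywhere with the integrable convolution `W' ⋆ g`, where
`g(y) = ∫ μ(t,y) w(t) ρ(dt)`; consequently, componentwise,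
`𝓕(-Lb^k)(ξ) = 𝓕(W'^k)(ξ) · 𝓕(g)(ξ)`. -/
theorem fourier_identification_vlasov (d : ℕ) (hd : 1 ≤ d) (T : ℝ) (hT : 0 < T)
    (ρ : Measure ℝ) [IsFiniteMeasure ρ]
    (w : ℝ → ℝ) (hw : Measurable w) (M : ℝ) (hwM : ∀ t, |w t| ≤ M)
    (hw0 : ∫ t in Set.Icc (0 : ℝ) T, w t ∂ρ = 0)
    (V' W' : EuclideanSpace ℝ (Fin d) → EuclideanSpace ℝ (Fin d))
    (hV' : Measurable V') (hW' : Measurable W')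
    (hW'int : ∀ j : Fin d, Integrable (fun x => W' x j) volume)
    (μ : ℝ → EuclideanSpace ℝ (Fin d) → ℝ)
    (hμmeas : Measurable (Function.uncurry μ))
    (hμpos : ∀ t y, 0 ≤ μ t y)
    (hμprob : ∀ t ∈ Set.Icc (0 : ℝ) T, ∫ y, μ t y = 1)
    (hint : Integrable (fun q : ℝ × EuclideanSpace ℝ (Fin d) => μ q.1 q.2 * |w q.1|)
      ((ρ.restrict (Set.Icc (0 : ℝ) T)).prod volume))
    (g : EuclideanSpace ℝ (Fin d) → ℝ)
    (hg : ∀ y, g y = ∫ t in Set.Icc (0 : ℝ) T, μ t y * w t ∂ρ)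
    (b : ℝ → EuclideanSpace ℝ (Fin d) → EuclideanSpace ℝ (Fin d))
    (hb : ∀ t x, b t x = -V' x - ∫ y, μ t y • W' (x - y)) :
    Integrable g volume ∧
    Integrable (fun x => ∫ y, g y • W' (x - y)) volume ∧
    (∀ᵐ x ∂(volume : Measure (EuclideanSpace ℝ (Fin d))),
      Integrable (fun t => w t • b t x) (ρ.restrict (Set.Icc (0 : ℝ) T)) ∧
      -(∫ t in Set.Icc (0 : ℝ) T, w t • b t x ∂ρ) = ∫ y, g y • W' (x - y)) ∧
    (∀ ξ : EuclideanSpace ℝ (Fin d), ∀ j : Fin d,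
      FourierTransform.fourier
          (fun x => (((-(∫ t in Set.Icc (0 : ℝ) T, w t • b t x ∂ρ) :
              EuclideanSpace ℝ (Fin d)) j : ℝ) : ℂ)) ξ =
        FourierTransform.fourier (fun x => ((W' x j : ℝ) : ℂ)) ξ *
          FourierTransform.fourier (fun x => ((g x : ℝ) : ℂ)) ξ) := by
  classical
  set ν : Measure ℝ := ρ.restrict (Set.Icc (0 : ℝ) T) with hν
  -- W' is integrable (componentwise hypothesis upgraded to vector integrability)
  have hrepr : ∀ v : EuclideanSpace ℝ (Fin d),
      ∑ j : Fin d, v j • EuclideanSpace.single j (1 : ℝ) = v := by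
    intro v
    simpa [EuclideanSpace.basisFun_apply, EuclideanSpace.basisFun_repr] using
      (EuclideanSpace.basisFun (Fin d) ℝ).sum_repr v
  have hW'I : Integrable W' volume := by
    have h1 : Integrable
        (fun x => ∑ j : Fin d, W' x j • EuclideanSpace.single j (1 : ℝ)) volume :=
      integrable_finset_sum _ fun j _ => (hW'int j).smul_const _
    exact h1.congr (Filter.Eventually.of_forall fun x => hrepr (W' x))
  set k : ℝ × EuclideanSpace ℝ (Fin d) → ℝ := fun q => μ q.1 q.2 * w q.1 with hk
  have hkmeas : Measurable k := hμmeas.mul (hw.comp measurable_fst)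
  have hkint : Integrable k (ν.prod volume) := by
    refine hint.mono' hkmeas.aestronglyMeasurable (Filter.Eventually.of_forall fun q => ?_)
    rw [Real.norm_eq_abs, hk]
    simp only []
    rw [abs_mul, abs_of_nonneg (hμpos q.1 q.2)]
  have hgI : Integrable g volume :=
    hkint.integral_prod_right.congr (Filter.Eventually.of_forall fun y => (hg y).symm)
  -- the big Fubini integrand
  have hJ' : Integrable (fun q : (ℝ × EuclideanSpace ℝ (Fin d)) × EuclideanSpace ℝ (Fin d) =>
      k q.1 • W' (q.2 - q.1.2)) ((ν.prod volume).prod volume) := by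
    have hmeas : Measurable
        (fun q : (ℝ × EuclideanSpace ℝ (Fin d)) × EuclideanSpace ℝ (Fin d) =>
          k q.1 • W' (q.2 - q.1.2)) :=
      (hkmeas.comp measurable_fst).smul
        (hW'.comp (measurable_snd.sub (measurable_snd.comp measurable_fst)))
    rw [integrable_prod_iff hmeas.aestronglyMeasurable]
    constructor
    · exact Filter.Eventually.of_forall fun q =>
        (hW'I.comp_sub_right q.2).smul (k q)
    · have heq : (fun q : ℝ × EuclideanSpace ℝ (Fin d) =>
          ∫ x, ‖k q • W' (x - q.2)‖) = fun q => ‖k q‖ * ∫ x, ‖W' x‖ := by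
        funext q
        simp only [norm_smul]
        rw [integral_const_mul]
        congr 1
        exact integral_sub_right_eq_self (fun x => ‖W' x‖) q.2
      rw [heq]
      exact hkint.norm.mul_const _
  have hJ : Integrable (fun p : EuclideanSpace ℝ (Fin d) × (ℝ × EuclideanSpace ℝ (Fin d)) =>
      k p.2 • W' (p.1 - p.2.2)) (volume.prod (ν.prod volume)) := hJ'.swap
  have haeJ : ∀ᵐ x ∂(volume : Measure (EuclideanSpace ℝ (Fin d))),
      Integrable (fun q : ℝ × EuclideanSpace ℝ (Fin d) => k q • W' (x - q.2))
        (ν.prod volume) := hJ.prod_right_ae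
  -- convolution integrand of g with W'
  have hconvI : Integrable (fun p : EuclideanSpace ℝ (Fin d) × EuclideanSpace ℝ (Fin d) =>
      g p.2 • W' (p.1 - p.2)) (volume.prod volume) := by
    simpa using hgI.convolution_integrand (ContinuousLinearMap.lsmul ℝ ℝ) hW'I
  have haeconv : ∀ᵐ x ∂(volume : Measure (EuclideanSpace ℝ (Fin d))),
      Integrable (fun y => g y • W' (x - y)) volume := hconvI.prod_right_ae
  have hconvInt : Integrable (fun x => ∫ y, g y • W' (x - y)) volume :=
    hconvI.integral_prod_left
  -- boundedness of w
  have hwInt : Integrable w ν := by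
    refine Integrable.mono' (integrable_const M) hw.aestronglyMeasurable
      (Filter.Eventually.of_forall fun t => ?_)
    simpa using hwM t
  have hw0' : ∫ t, w t ∂ν = 0 := hw0
  -- the main a.e. statement
  have hmain : ∀ᵐ x ∂(volume : Measure (EuclideanSpace ℝ (Fin d))),
      Integrable (fun t => w t • b t x) ν ∧
      -(∫ t, w t • b t x ∂ν) = ∫ y, g y • W' (x - y) := by
    filter_upwards [haeJ] with x hx
    have hpt : ∀ t, (∫ y, k (t, y) • W' (x - y)) = w t • ∫ y, μ t y • W' (x - y) := by
      intro t
      rw [← integral_smul]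
      congr 1
      ext y
      rw [hk]
      simp only []
      rw [smul_smul, mul_comm]
    have hI1 : Integrable (fun t => ∫ y, k (t, y) • W' (x - y)) ν := hx.integral_prod_left
    have hI2 : Integrable (fun t => w t • (∫ y, μ t y • W' (x - y))) ν :=
      hI1.congr (Filter.Eventually.of_forall fun t => hpt t)
    have hbeq : (fun t => w t • b t x) =
        fun t => -(w t • V' x) - w t • (∫ y, μ t y • W' (x - y)) := by
      funext t
      rw [hb, smul_sub, smul_neg]
    have hIb : Integrable (fun t => w t • b t x) ν := by
      rw [hbeq]
      exact (hwInt.smul_const (V' x)).neg.sub hI2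
    refine ⟨hIb, ?_⟩
    have hIf1 : Integrable (fun t => -(w t • V' x)) ν := (hwInt.smul_const (V' x)).neg
    have hsplit : ∫ t, w t • b t x ∂ν =
        (∫ t, -(w t • V' x) ∂ν) - ∫ t, w t • (∫ y, μ t y • W' (x - y)) ∂ν := by
      rw [hbeq]
      exact integral_sub hIf1 hI2
    have hfirst : (∫ t, -(w t • V' x) ∂ν) = 0 := by
      rw [integral_neg, integral_smul_const, hw0', zero_smul, neg_zero]
    have hswap : ∫ t, ∫ y, k (t, y) • W' (x - y) ∂volume ∂ν
        = ∫ y, ∫ t, k (t, y) • W' (x - y) ∂ν ∂volume := integral_integral_swap hx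
    have hinner : ∀ y, (∫ t, k (t, y) • W' (x - y) ∂ν) = g y • W' (x - y) := by
      intro y
      rw [integral_smul_const]
      congr 1
      rw [hg y]
    calc -(∫ t, w t • b t x ∂ν)
        = -((∫ t, -(w t • V' x) ∂ν) - ∫ t, w t • (∫ y, μ t y • W' (x - y)) ∂ν) := by
          rw [hsplit]
      _ = ∫ t, w t • (∫ y, μ t y • W' (x - y)) ∂ν := by rw [hfirst, zero_sub, neg_neg]
      _ = ∫ t, ∫ y, k (t, y) • W' (x - y) ∂volume ∂ν :=
          integral_congr_ae (Filter.Eventually.of_forall fun t => (hpt t).symm)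
      _ = ∫ y, ∫ t, k (t, y) • W' (x - y) ∂ν ∂volume := hswap
      _ = ∫ y, g y • W' (x - y) :=
          integral_congr_ae (Filter.Eventually.of_forall fun y => hinner y)
  refine ⟨hgI, hconvInt, hmain, ?_⟩
  intro ξ j
  have hae1 : (fun x => ((-(∫ t, w t • b t x ∂ν) : EuclideanSpace ℝ (Fin d)) j : ℂ))
      =ᵐ[volume] fun x => ∫ y, ((g y : ℝ) : ℂ) * ((W' (x - y) j : ℝ) : ℂ) := by
    filter_upwards [hmain, haeconv] with x hx hcx
    rw [hx.2]
    have hcomp : (∫ y, g y • W' (x - y)) j = ∫ y, g y * (W' (x - y) j) := by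
      have h1 := (EuclideanSpace.proj (𝕜 := ℝ) j).integral_comp_comm hcx
      simpa [smul_eq_mul] using h1.symm
    rw [hcomp,
      show (fun y => ((g y : ℝ) : ℂ) * ((W' (x - y) j : ℝ) : ℂ)) =
          fun y => ((g y * W' (x - y) j : ℝ) : ℂ) from funext fun y => by push_cast; ring]
    exact integral_ofReal.symm
  calc FourierTransform.fourier
        (fun x => ((-(∫ t, w t • b t x ∂ν) : EuclideanSpace ℝ (Fin d)) j : ℂ)) ξ
      = FourierTransform.fourier
        (fun x => ∫ y, ((g y : ℝ) : ℂ) * ((W' (x - y) j : ℝ) : ℂ)) ξ := by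
        simp only [Real.fourier_eq]
        exact integral_congr_ae (hae1.mono fun x hx => by dsimp only at hx ⊢; rw [hx])
    _ = FourierTransform.fourier (fun y => ((g y : ℝ) : ℂ)) ξ *
          FourierTransform.fourier (fun x => ((W' x j : ℝ) : ℂ)) ξ :=
        fourier_conv_aux _ _ hgI.ofReal (hW'int j).ofReal ξ
    _ = FourierTransform.fourier (fun x => ((W' x j : ℝ) : ℂ)) ξ *
          FourierTransform.fourier (fun x => ((g x : ℝ) : ℂ)) ξ := mul_comm _ _
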